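/- Let N and i be natural numbers with N ≥ i ≥ 1, let R_k > 0 be a real number, and let L_0, L_1, ..., L_i be real numbers with L_0 = 0 and 0 ≤ L_1 ≤ ... ≤ L_i. Define f_i = (Σ_{n=1}^{i} L_n)/R_k and f̂_i = Σ_{n=1}^{i} ((N − n + 1)/R_k)·(L_n − L_{n−1}). Then f_i ≤ f̂_i. -/

import Mathlib

lemma abel_id (L : ℕ → ℝ) (hL0 : L 0 = 0) :
    ∀ i : ℕ, ∑ n ∈ Finset.Icc 1 i, ((i : ℝ) - (n : ℝ) + 1) * (L n - L (n - 1))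
      = ∑ n ∈ Finset.Icc 1 i, L n := by
  intro i
  induction i with
  | zero => simp
  | succ i ih =>
    have htel : ∀ m : ℕ, ∑ n ∈ Finset.Icc 1 (m + 1), (L n - L (n - 1)) = L (m + 1) := by
      intro m
      induction m with
      | zero => simp [hL0]
      | succ j ihj =>
        rw [Finset.sum_Icc_succ_top (by omega : 1 ≤ j + 1 + 1), ihj]
        simp
    have hsplit : ∀ n ∈ Finset.Icc 1 (i + 1),
        ((i + 1 : ℕ) : ℝ) - (n : ℝ) + 1 = (((i : ℝ) - n + 1) + 1) := by
      intro n _; push_cast; ring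
    calc ∑ n ∈ Finset.Icc 1 (i + 1), (((i + 1 : ℕ) : ℝ) - (n : ℝ) + 1) * (L n - L (n - 1))
        = ∑ n ∈ Finset.Icc 1 (i + 1), (((i : ℝ) - n + 1) * (L n - L (n - 1)) + (L n - L (n - 1))) := by
          refine Finset.sum_congr rfl fun n hn => ?_
          rw [hsplit n hn]; ring
      _ = (∑ n ∈ Finset.Icc 1 (i + 1), ((i : ℝ) - n + 1) * (L n - L (n - 1))) + L (i + 1) := by
          rw [Finset.sum_add_distrib, htel i]
      _ = ∑ n ∈ Finset.Icc 1 (i + 1), L n := by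
          rw [Finset.sum_Icc_succ_top (by omega : 1 ≤ i + 1),
            Finset.sum_Icc_succ_top (by omega : 1 ≤ i + 1)]
          push_cast
          rw [ih]
          ring

/-- Theorem 1: the 2-level virtual time finish time `f_i` is no later than the
user-job fair finish time `f̂_i`. -/
theorem stmt_3 (N i : ℕ) (hi : 1 ≤ i) (hNi : i ≤ N) (Rk : ℝ) (hRk : 0 < Rk)
    (L : ℕ → ℝ) (hL0 : L 0 = 0)
    (hmono : ∀ n, 1 ≤ n → n ≤ i → L (n - 1) ≤ L n) :
    (∑ n ∈ Finset.Icc 1 i, L n) / Rk ≤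
      ∑ n ∈ Finset.Icc 1 i, (((N : ℝ) - (n : ℝ) + 1) / Rk) * (L n - L (n - 1)) := by
  have key : (∑ n ∈ Finset.Icc 1 i, L n)
      ≤ ∑ n ∈ Finset.Icc 1 i, ((N : ℝ) - (n : ℝ) + 1) * (L n - L (n - 1)) := by
    rw [← abel_id L hL0 i]
    refine Finset.sum_le_sum fun n hn => ?_
    simp only [Finset.mem_Icc] at hn
    have hΔ : 0 ≤ L n - L (n - 1) := sub_nonneg.2 (hmono n hn.1 hn.2)
    have : (i : ℝ) - n + 1 ≤ (N : ℝ) - n + 1 := by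
      have : (i : ℝ) ≤ N := by exact_mod_cast hNi
      linarith
    exact mul_le_mul_of_nonneg_right this hΔ
  calc (∑ n ∈ Finset.Icc 1 i, L n) / Rk
      ≤ (∑ n ∈ Finset.Icc 1 i, ((N : ℝ) - (n : ℝ) + 1) * (L n - L (n - 1))) / Rk := by
        gcongr
    _ = ∑ n ∈ Finset.Icc 1 i, (((N : ℝ) - (n : ℝ) + 1) / Rk) * (L n - L (n - 1)) := by
        rw [Finset.sum_div]
        exact Finset.sum_congr rfl fun n _ => by ring
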